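/- Let k ≥ 2 and ℓ ≥ 2 be integers, n = kℓ, let α ≥ 1 be a real number, set W = αℓ + 1, and let X, Y ⊆ {1,…,k−1} be sets with X ∩ Y = {z} for a single element z. Define a weighted simple graph G on V = {0,…,n−1} with the following edges and positive edge weights: (a) for each 0 ≤ i ≤ n−k−1 an edge {i, i+k} of weight W; (b) for each integer s ≥ 1 and each i divisible by k·2^s with i + k·2^s ≤ n−1, an edge {i, i+k·2^s} of weight 1; (c) for each g ∈ {0,…,ℓ−1} and each x ∈ {1,…,k−1}, an edge {gk, gk+x}, with weight W if (g = 0 and x ∉ X) or (g = ℓ−1 and x ∉ Y), and weight 1 otherwise. Let S_z = {i ∈ V : i ≡ z (mod k)}. Then the total weight of the edges crossing the cut (S_z, V ∖ S_z) equals ℓ, and for every nonempty proper vertex set S ⊆ V with S ≠ S_z and S ≠ V ∖ S_z, the total weight of the edges crossing (S, V ∖ S) is at least αℓ + 1. -/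
import Mathlib


open Classical

/-- The weighted lower-bound graph on `{0, …, n-1}` (`n = k·ℓ`)
encoding a set-disjointness instance `(X, Y)` with `X ∩ Y = {z}`: the cut around the
path `S_z = {i : i ≡ z (mod k)}` has total weight exactly `ℓ`, and every other
nontrivial cut has total weight at least `α·ℓ + 1`. Here `ew a b` is the weight of the
edge `{a, b}` (with `ew a b = 0` when `{a,b}` is not an edge), and
`cutW S = Σ_{u ∈ S} Σ_{v ∉ S} ew u v` is the weight of the cut `(S, V ∖ S)`. -/
theorem statement14 (k ℓ n : ℕ) (hk : 2 ≤ k) (hℓ : 2 ≤ ℓ) (hn : n = k * ℓ)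
    (α : ℝ) (hα : 1 ≤ α) (W : ℝ) (hW : W = α * ℓ + 1)
    (X Y : Finset ℕ) (hX : X ⊆ Finset.Icc 1 (k - 1)) (hY : Y ⊆ Finset.Icc 1 (k - 1))
    (z : ℕ) (hXY : X ∩ Y = {z})
    (ew : ℕ → ℕ → ℝ)
    (hew : ∀ a b : ℕ, a < b → b ≤ n - 1 →
      ew a b =
        if b = a + k then W
        else if ∃ s : ℕ, 1 ≤ s ∧ (k * 2 ^ s) ∣ a ∧ b = a + k * 2 ^ s then 1
        else if k ∣ a ∧ b < a + k then
          (if (a = 0 ∧ b - a ∉ X) ∨ (a = (ℓ - 1) * k ∧ b - a ∉ Y) then W else 1)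
        else 0)
    (hsymm : ∀ a b, ew a b = ew b a) (hdiag : ∀ a, ew a a = 0)
    (cutW : Finset (Fin n) → ℝ)
    (hcutW : ∀ S : Finset (Fin n),
      cutW S = ∑ u ∈ S, ∑ v ∈ Sᶜ, ew (u : ℕ) (v : ℕ))
    (Sz : Finset (Fin n))
    (hSzdef : Sz = Finset.univ.filter (fun i : Fin n => (i : ℕ) % k = z)) :
    cutW Sz = ℓ ∧
    ∀ S : Finset (Fin n), S.Nonempty → S ≠ Finset.univ → S ≠ Sz → S ≠ Szᶜ →
      α * ℓ + 1 ≤ cutW S := by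
  -- basic numeric facts
  have hzmem : z ∈ X ∩ Y := by rw [hXY]; exact Finset.mem_singleton_self z
  have hzX : z ∈ X := (Finset.mem_inter.1 hzmem).1
  have hzY : z ∈ Y := (Finset.mem_inter.1 hzmem).2
  have hzIcc := hX hzX
  have hz1 : 1 ≤ z := (Finset.mem_Icc.1 hzIcc).1
  have hzk : z ≤ k - 1 := (Finset.mem_Icc.1 hzIcc).2
  have hzltk : z < k := by omega
  have hlk : ℓ * k = n := by rw [hn, mul_comm]
  have hkk : k ≤ ℓ * k := Nat.le_mul_of_pos_left k (by omega)
  have h2k : 2 * k ≤ n := by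
    have : 2 * k ≤ ℓ * k := Nat.mul_le_mul_right k hℓ
    omega
  have hl1k : (ℓ - 1) * k = ℓ * k - k := by rw [Nat.sub_mul, one_mul]
  have hl1kn : (ℓ - 1) * k + k = n := by omega
  have hW1 : (1 : ℝ) ≤ W := by
    have h1 : (1 : ℝ) ≤ (ℓ : ℝ) := by exact_mod_cast Nat.one_le_iff_ne_zero.2 (by omega)
    nlinarith
  have hW0 : (0 : ℝ) ≤ W := by linarith
  -- useful: 2^s ≥ 2 for s ≥ 1
  have hpow : ∀ s : ℕ, 1 ≤ s → 2 * k ≤ k * 2 ^ s := by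
    intro s hs
    have h2 : 2 ≤ 2 ^ s := by
      calc 2 = 2 ^ 1 := rfl
      _ ≤ 2 ^ s := Nat.pow_le_pow_right (by norm_num) hs
    calc 2 * k = k * 2 := by ring
    _ ≤ k * 2 ^ s := Nat.mul_le_mul_left k h2
  -- edge weight value lemmas
  have hewk : ∀ a : ℕ, a + k ≤ n - 1 → ew a (a + k) = W := by
    intro a ha
    rw [hew a (a + k) (by omega) ha, if_pos rfl]
  have hew0x : ∀ x : ℕ, 1 ≤ x → x < k → x ∉ X → ew 0 x = W := by
    intro x hx1 hx2 hxX
    rw [hew 0 x (by omega) (by omega)]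
    rw [if_neg (by omega)]
    rw [if_neg (by rintro ⟨s, hs, -, hb⟩; have := hpow s hs; omega)]
    rw [if_pos ⟨dvd_zero k, by omega⟩]
    rw [if_pos (Or.inl ⟨rfl, by simpa using hxX⟩)]
  have hewYx : ∀ x : ℕ, 1 ≤ x → x < k → x ∉ Y →
      ew ((ℓ - 1) * k) ((ℓ - 1) * k + x) = W := by
    intro x hx1 hx2 hxY
    rw [hew ((ℓ - 1) * k) ((ℓ - 1) * k + x) (by omega) (by omega)]
    rw [if_neg (by omega)]
    rw [if_neg (by rintro ⟨s, hs, -, hb⟩; have := hpow s hs; omega)]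
    rw [if_pos ⟨dvd_mul_left k (ℓ-1), by omega⟩]
    rw [if_pos (Or.inr ⟨rfl, by simpa using hxY⟩)]
  have hewgz : ∀ g : ℕ, g < ℓ → ew (g * k) (g * k + z) = 1 := by
    intro g hg
    have hgk : g * k ≤ (ℓ - 1) * k := Nat.mul_le_mul_right k (by omega)
    rw [hew (g * k) (g * k + z) (by omega) (by omega)]
    rw [if_neg (by omega)]
    rw [if_neg (by rintro ⟨s, hs, -, hb⟩; have := hpow s hs; omega)]
    rw [if_pos ⟨dvd_mul_left k g, by omega⟩]
    rw [if_neg ?_]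
    simp only [Nat.add_sub_cancel_left]
    rintro (⟨-, hzX'⟩ | ⟨-, hzY'⟩)
    · exact hzX' hzX
    · exact hzY' hzY
  -- zero lemma for the cut around Sz
  have hzero : ∀ g : ℕ, g < ℓ → ∀ v : ℕ, v < n → v % k ≠ z → v ≠ g * k →
      ew (g * k + z) v = 0 := by
    intro g hg v hvn hvz hvgk
    have hgk : g * k ≤ (ℓ - 1) * k := Nat.mul_le_mul_right k (by omega)
    have humod : (g * k + z) % k = z := by
      rw [add_comm, Nat.add_mul_mod_self_right, Nat.mod_eq_of_lt hzltk]
    rcases lt_trichotomy v (g * k + z) with hlt | heq | hgt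
    · have hc1 : ¬ (g * k + z = v + k) := by
        intro hb
        have : v % k = z := by
          have := Nat.add_mod_right v k
          rw [← hb, humod] at this
          omega
        exact hvz this
      have hc2 : ¬ ∃ s, 1 ≤ s ∧ k * 2 ^ s ∣ v ∧ g * k + z = v + k * 2 ^ s := by
        rintro ⟨s, hs, ⟨c, hc⟩, hb⟩
        have : (g * k + z) % k = 0 := by
          rw [hb, hc, show k * 2 ^ s * c + k * 2 ^ s = k * (2 ^ s * c + 2 ^ s) by ring,
            Nat.mul_mod_right]
        omega
      have hc3 : ¬ (k ∣ v ∧ g * k + z < v + k) := by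
        rintro ⟨⟨c, hc⟩, hlt2⟩
        have hd : (g * k + z) % k = (g * k + z - v) % k := by
          conv_lhs => rw [show g * k + z = v + (g * k + z - v) by omega]
          rw [hc, Nat.mul_add_mod]
        have : g * k + z - v = z := by
          rw [humod] at hd
          have hdk : g * k + z - v < k := by omega
          rw [Nat.mod_eq_of_lt hdk] at hd
          omega
        exact hvgk (by omega)
      rw [hsymm, hew v (g * k + z) hlt (by omega), if_neg hc1, if_neg hc2, if_neg hc3]
    · exact absurd (heq ▸ humod) hvz
    · have hc1 : ¬ (v = (g * k + z) + k) := by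
        intro hb
        have : v % k = z := by
          have := Nat.add_mod_right (g * k + z) k
          rw [← hb] at this
          rw [this, humod]
        exact hvz this
      have hc2 : ¬ ∃ s, 1 ≤ s ∧ k * 2 ^ s ∣ (g * k + z) ∧ v = (g * k + z) + k * 2 ^ s := by
        rintro ⟨s, hs, ⟨c, hc⟩, -⟩
        have : (g * k + z) % k = 0 := by
          rw [hc, show k * 2 ^ s * c = k * (2 ^ s * c) by ring, Nat.mul_mod_right]
        omega
      have hc3 : ¬ (k ∣ (g * k + z) ∧ v < (g * k + z) + k) := by
        rintro ⟨⟨c, hc⟩, -⟩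
        have : (g * k + z) % k = 0 := by rw [hc, Nat.mul_mod_right]
        omega
      rw [hew (g * k + z) v hgt (by omega), if_neg hc1, if_neg hc2, if_neg hc3]
  -- membership bounds
  have hzn : z < n := by omega
  have h0n : 0 < n := by omega
  -- Part 1: the cut around Sz has weight ℓ
  have part1 : cutW Sz = ℓ := by
    rw [hcutW, hSzdef]
    have hinner : ∀ u ∈ Finset.univ.filter (fun i : Fin n => (i : ℕ) % k = z),
        (∑ v ∈ (Finset.univ.filter (fun i : Fin n => (i : ℕ) % k = z))ᶜ,
          ew (u : ℕ) (v : ℕ)) = 1 := by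
      intro u hu
      have huz : (u : ℕ) % k = z := (Finset.mem_filter.1 hu).2
      have hdm := Nat.div_add_mod (u : ℕ) k
      set g := (u : ℕ) / k with hg
      have hval : (u : ℕ) = g * k + z := by
        have h3 : k * g = g * k := Nat.mul_comm k g
        omega
      have hgl : g < ℓ := by
        by_contra hcon
        push_neg at hcon
        have h1 : ℓ * k ≤ g * k := Nat.mul_le_mul_right k hcon
        have h2 := u.isLt
        have h3 : k * g = g * k := Nat.mul_comm k g
        omega
      have hgkle : g * k ≤ (ℓ - 1) * k := Nat.mul_le_mul_right k (by omega)
      have hv0n : g * k < n := by omega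
      set v0 : Fin n := ⟨g * k, hv0n⟩ with hv0
      have hv0mem : v0 ∈ (Finset.univ.filter (fun i : Fin n => (i : ℕ) % k = z))ᶜ := by
        simp only [Finset.mem_compl, Finset.mem_filter, Finset.mem_univ, true_and]
        show ¬ (g * k) % k = z
        rw [Nat.mul_mod_left]
        omega
      rw [Finset.sum_eq_single_of_mem v0 hv0mem ?_]
      · show ew (u : ℕ) (g * k) = 1
        rw [hval, hsymm]
        exact hewgz g hgl
      · intro v hv hne
        have hvz : ¬ ((v : ℕ) % k = z) := by
          have := Finset.mem_compl.1 hv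
          simpa [Finset.mem_filter] using this
        have hvval : (v : ℕ) ≠ g * k := fun h => hne (Fin.ext h)
        rw [hval]
        exact hzero g hgl (v : ℕ) v.isLt hvz hvval
    rw [Finset.sum_congr rfl hinner, Finset.sum_const, nsmul_eq_mul, mul_one]
    have hcard : (Finset.univ.filter (fun i : Fin n => (i : ℕ) % k = z)).card = ℓ := by
      rw [show ℓ = (Finset.univ : Finset (Fin ℓ)).card by simp]
      refine Finset.card_bij' (fun u _ => (⟨(u : ℕ) / k,
          Nat.div_lt_of_lt_mul (by rw [← hn]; exact u.isLt)⟩ : Fin ℓ))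
        (fun g _ => (⟨z + (g : ℕ) * k, by
          have hgk : (g : ℕ) * k ≤ (ℓ - 1) * k := Nat.mul_le_mul_right k (by omega)
          omega⟩ : Fin n)) ?_ ?_ ?_ ?_
      · intro a ha
        exact Finset.mem_univ _
      · intro g _
        simp only [Finset.mem_filter, Finset.mem_univ, true_and]
        show (z + (g : ℕ) * k) % k = z
        rw [Nat.add_mul_mod_self_right, Nat.mod_eq_of_lt hzltk]
      · intro u hu
        have huz : (u : ℕ) % k = z := (Finset.mem_filter.1 hu).2
        have hdm := Nat.div_add_mod (u : ℕ) k
        apply Fin.ext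
        show z + (u : ℕ) / k * k = (u : ℕ)
        have h3 : k * ((u:ℕ) / k) = (u:ℕ) / k * k := Nat.mul_comm _ _
        omega
      · intro g _
        apply Fin.ext
        show (z + (g : ℕ) * k) / k = (g : ℕ)
        rw [Nat.add_mul_div_right z (g : ℕ) (by omega), Nat.div_eq_of_lt hzltk, zero_add]
    rw [hcard]
  refine ⟨part1, ?_⟩
  -- Part 2
  intro S hSne hSuniv hSSz hSSzc
  by_contra hcon
  push_neg at hcon
  have hlt : cutW S < W := by rw [hW]; exact hcon
  -- nonnegativity of weights
  have hnn : ∀ a b : ℕ, a < n → b < n → 0 ≤ ew a b := by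
    have key : ∀ a b : ℕ, a < b → b < n → 0 ≤ ew a b := by
      intro a b hab hbn
      rw [hew a b hab (by omega)]
      split_ifs <;> norm_num
      exact hW0
      exact hW0
    intro a b han hbn
    rcases lt_trichotomy a b with h | h | h
    · exact key a b h hbn
    · rw [h, hdiag]
    · rw [hsymm]; exact key b a h han
  -- every crossing edge weight is at most cutW S
  have hle : ∀ a ∈ S, ∀ b ∈ Sᶜ, ew (a : ℕ) (b : ℕ) ≤ cutW S := by
    intro a ha b hb
    rw [hcutW]
    calc ew (a : ℕ) (b : ℕ) ≤ ∑ v ∈ Sᶜ, ew (a : ℕ) (v : ℕ) :=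
          Finset.single_le_sum (f := fun v : Fin n => ew (a : ℕ) (v : ℕ))
            (fun v _ => hnn _ _ a.isLt v.isLt) hb
    _ ≤ ∑ u ∈ S, ∑ v ∈ Sᶜ, ew (u : ℕ) (v : ℕ) :=
          Finset.single_le_sum (f := fun u : Fin n => ∑ v ∈ Sᶜ, ew (u : ℕ) (v : ℕ))
            (fun u _ => Finset.sum_nonneg fun v _ => hnn _ _ u.isLt v.isLt) ha
  -- S is closed under heavy edges
  have hclosed : ∀ a b : Fin n, ew (a : ℕ) (b : ℕ) = W → (a ∈ S ↔ b ∈ S) := by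
    intro a b hab
    constructor
    · intro ha
      by_contra hb
      have := hle a ha b (Finset.mem_compl.2 hb)
      rw [hab] at this
      linarith
    · intro hb
      by_contra ha
      have := hle b hb a (Finset.mem_compl.2 ha)
      rw [hsymm, hab] at this
      linarith
  have hstep : ∀ (m₁ m₂ : ℕ) (h1 : m₁ < n) (h2 : m₂ < n), m₂ = m₁ + k →
      ((⟨m₁, h1⟩ : Fin n) ∈ S ↔ (⟨m₂, h2⟩ : Fin n) ∈ S) := by
    intro m₁ m₂ h1 h2 he
    apply hclosed ⟨m₁, h1⟩ ⟨m₂, h2⟩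
    show ew m₁ m₂ = W
    rw [he]
    exact hewk m₁ (by omega)
  have hpath : ∀ (x g : ℕ), x < k → g < ℓ → ∀ (h1 : x + g * k < n) (h2 : x < n),
      ((⟨x + g * k, h1⟩ : Fin n) ∈ S ↔ (⟨x, h2⟩ : Fin n) ∈ S) := by
    intro x g
    induction g with
    | zero => intro _ _ h1 h2; simp
    | succ m ih =>
      intro hx hg h1 h2
      have hmul : x + (m + 1) * k = (x + m * k) + k := by ring
      have h1' : x + m * k < n := by omega
      rw [← hstep (x + m * k) (x + (m + 1) * k) h1' h1 hmul]
      exact ih hx (by omega) h1' h2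
  have hstar0 : ∀ x : ℕ, 1 ≤ x → x < k → x ∉ X → ∀ (h1 : x < n),
      ((⟨x, h1⟩ : Fin n) ∈ S ↔ (⟨0, h0n⟩ : Fin n) ∈ S) := by
    intro x hx1 hx2 hxX h1
    exact (hclosed ⟨0, h0n⟩ ⟨x, h1⟩ (hew0x x hx1 hx2 hxX)).symm
  have hstarY : ∀ x : ℕ, 1 ≤ x → x < k → x ∉ Y →
      ∀ (h1 : (ℓ - 1) * k + x < n) (h2 : (ℓ - 1) * k < n),
      ((⟨(ℓ - 1) * k + x, h1⟩ : Fin n) ∈ S ↔ (⟨(ℓ - 1) * k, h2⟩ : Fin n) ∈ S) := by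
    intro x hx1 hx2 hxY h1 h2
    exact (hclosed ⟨(ℓ - 1) * k, h2⟩ ⟨(ℓ - 1) * k + x, h1⟩ (hewYx x hx1 hx2 hxY)).symm
  -- classification of membership
  have hmain : ∀ u : Fin n, u ∈ S ↔
      (if (u : ℕ) % k = z then (⟨z, hzn⟩ : Fin n) ∈ S else (⟨0, h0n⟩ : Fin n) ∈ S) := by
    intro u
    have hdm := Nat.div_add_mod (u : ℕ) k
    set x := (u : ℕ) % k with hxdef
    set g := (u : ℕ) / k with hgdef
    have hx : x < k := Nat.mod_lt _ (by omega)
    have hval : (u : ℕ) = x + g * k := by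
      have h3 : k * g = g * k := Nat.mul_comm k g
      omega
    have hgl : g < ℓ := by
      by_contra hc
      push_neg at hc
      have h1 : ℓ * k ≤ g * k := Nat.mul_le_mul_right k hc
      have h2 := u.isLt
      have h3 : k * g = g * k := Nat.mul_comm k g
      omega
    have hxn : x < n := by omega
    have hu : u = (⟨x + g * k, by omega⟩ : Fin n) := Fin.ext hval
    rw [hu, hpath x g hx hgl _ hxn]
    split_ifs with hxz
    · exact iff_of_eq (congrArg (· ∈ S) (Fin.ext hxz))
    · rcases Nat.eq_zero_or_pos x with hx0 | hx1
      · exact iff_of_eq (congrArg (· ∈ S) (Fin.ext hx0))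
      · have hxor : x ∉ X ∨ x ∉ Y := by
          by_contra hc
          push_neg at hc
          have : x ∈ X ∩ Y := Finset.mem_inter.2 ⟨hc.1, hc.2⟩
          rw [hXY, Finset.mem_singleton] at this
          exact hxz this
        rcases hxor with hxX | hxY
        · exact hstar0 x hx1 hx hxX hxn
        · have hA : x + (ℓ - 1) * k < n := by omega
          have hB : (ℓ - 1) * k + x < n := by omega
          have hC : (ℓ - 1) * k < n := by omega
          have hD : (0 : ℕ) + (ℓ - 1) * k < n := by omega
          have e1 := hpath x (ℓ - 1) hx (by omega) hA hxn
          have e2 := hstarY x hx1 hx hxY hB hC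
          have e3 := hpath 0 (ℓ - 1) (by omega) (by omega) hD h0n
          have eq1 : (⟨x + (ℓ - 1) * k, hA⟩ : Fin n) = ⟨(ℓ - 1) * k + x, hB⟩ := by
            apply Fin.ext
            show x + (ℓ - 1) * k = (ℓ - 1) * k + x
            omega
          have eq2 : (⟨0 + (ℓ - 1) * k, hD⟩ : Fin n) = ⟨(ℓ - 1) * k, hC⟩ := by
            apply Fin.ext
            show 0 + (ℓ - 1) * k = (ℓ - 1) * k
            omega
          rw [eq1] at e1
          rw [eq2] at e3
          exact e1.symm.trans (e2.trans e3)
  -- finish by case analysis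
  by_cases h0S : (⟨0, h0n⟩ : Fin n) ∈ S <;> by_cases hzS : (⟨z, hzn⟩ : Fin n) ∈ S
  · exact hSuniv (Finset.eq_univ_iff_forall.2 fun u => by
      rw [hmain u]; split_ifs <;> assumption)
  · apply hSSzc
    ext u
    rw [Finset.mem_compl, hSzdef, Finset.mem_filter]
    simp only [Finset.mem_univ, true_and]
    rw [hmain u]
    split_ifs with h
    · exact iff_of_false hzS (by simp [h])
    · exact iff_of_true h0S h
  · apply hSSz
    ext u
    rw [hSzdef, Finset.mem_filter]
    simp only [Finset.mem_univ, true_and]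
    rw [hmain u]
    split_ifs with h
    · exact iff_of_true hzS h
    · exact iff_of_false h0S h
  · obtain ⟨u, hu⟩ := hSne
    rw [hmain u] at hu
    split_ifs at hu <;> contradiction
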